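/- If f is a small oracle, then there exists a constant c and a single fixed value i₀ < c such that for every k there exists n ≥ k for which at least ⌈k/c⌉ of the values in f(n) equal i₀ (i.e., the same popular value i₀ works for arbitrarily large k). -/
import Mathlib


/-- A scalar oracle is represented as `f : ℕ → ℕ → ℕ`, where `f n k` is the
`k`-th smallest label `f_k^{(n)}` on input `n` (meaningful for `1 ≤ k ≤ n`). -/
def IsLarge (f : ℕ → ℕ → ℕ) : Prop :=
  ∀ c > 0, ∃ k ≥ 1, ∀ n ≥ k, f n k ≥ c

theorem small_oracle_fixed_popular_value (f : ℕ → ℕ → ℕ)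
    (hmono : ∀ n, ∀ i j, 1 ≤ i → i ≤ j → j ≤ n → f n i ≤ f n j)
    (hf : ¬ IsLarge f) :
    ∃ c ≥ 1, ∃ i₀ < c, ∀ k ≥ 1, ∃ n ≥ k,
      (k + c - 1) / c ≤ ((Finset.Icc 1 n).filter (fun j => f n j = i₀)).card := by
  rw [IsLarge] at hf
  push_neg at hf
  obtain ⟨c, hc, H⟩ := hf
  refine ⟨c, hc, ?_⟩
  -- key pigeonhole step for each k
  have key : ∀ k ≥ 1, ∃ n ≥ k, ∃ i < c,
      (k + c - 1) / c ≤ ((Finset.Icc 1 n).filter (fun j => f n j = i)).card := by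
    intro k hk
    obtain ⟨n, hn, hfn⟩ := H k hk
    refine ⟨n, hn, ?_⟩
    have maps : ∀ j ∈ Finset.Icc 1 k, f n j ∈ Finset.range c := by
      intro j hj
      simp only [Finset.mem_Icc] at hj
      have : f n j ≤ f n k := hmono n j k hj.1 hj.2 hn
      simp only [Finset.mem_range]
      omega
    have hq1 : c * ((k + c - 1) / c) ≤ k + c - 1 := Nat.mul_div_le _ _
    have hq2 : 1 ≤ (k + c - 1) / c := by
      rw [Nat.le_div_iff_mul_le hc]; omega
    have hcard : (Finset.range c).card * ((k + c - 1) / c - 1) < (Finset.Icc 1 k).card := by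
      rw [Finset.card_range, Nat.card_Icc]
      have h3 : c * ((k + c - 1) / c - 1 + 1) = c * ((k + c - 1) / c) := by
        rw [Nat.sub_add_cancel hq2]
      rw [Nat.mul_add, Nat.mul_one] at h3
      omega
    obtain ⟨i, hi, hcount⟩ :=
      Finset.exists_lt_card_fiber_of_mul_lt_card_of_maps_to maps hcard
    refine ⟨i, Finset.mem_range.mp hi, ?_⟩
    have hsub : (Finset.Icc 1 k).filter (fun j => f n j = i) ⊆
        (Finset.Icc 1 n).filter (fun j => f n j = i) := by
      exact Finset.filter_subset_filter _ (Finset.Icc_subset_Icc_right hn)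
    have := Finset.card_le_card hsub
    omega
  by_contra hcon
  push_neg at hcon
  choose g hg1 hg2 using hcon
  set K : ℕ := ((Finset.range c).sup fun i => if h : i < c then g i h else 0) + 1 with hK
  obtain ⟨n, hn, i, hi, hcount⟩ := key K (by omega)
  have hgi : g i hi ≤ K := by
    have : (if h : i < c then g i h else 0) ≤ (Finset.range c).sup
        fun i => if h : i < c then g i h else 0 :=
      Finset.le_sup (f := fun i => if h : i < c then g i h else 0) (Finset.mem_range.mpr hi)
    rw [dif_pos hi] at this
    omega
  have hbad := hg2 i hi n (le_trans hgi hn)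
  have hmonoceil : (g i hi + c - 1) / c ≤ (K + c - 1) / c :=
    Nat.div_le_div_right (by omega)
  omega
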